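/- arXiv:2603.08213 — 2 statements merged into one kernel-verified Lean document; each statement's English description precedes it below -/
import Mathlib

section
/- For every natural number k ≥ 5, the minimum distance of the code L_k^+ is 6: every nonzero codeword c ·ᵥ G_{L_k^+} with c ∈ 𝔽₂^k, c ≠ 0, has Hamming weight at least 6, and some nonzero codeword has Hamming weight exactly 6. -/
open Matrix

/-- The k×k matrix over 𝔽₂ with 0 on the diagonal and 1 off the diagonal. -/
def Gmat (k : ℕ) : Matrix (Fin k) (Fin k) (ZMod 2) :=
  fun i j => if i = j then 0 else 1

/-- Generator matrix of the code `L_k^+`: the block matrix `[I_k | G_k | I_k]`. -/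
def GLkp (k : ℕ) : Matrix (Fin k) (Fin k ⊕ Fin k ⊕ Fin k) (ZMod 2) :=
  Matrix.fromCols 1 (Matrix.fromCols (Gmat k) 1)

/-- Hamming weight: the number of nonzero coordinates of a vector. -/
def wt {n : Type*} [Fintype n] (v : n → ZMod 2) : ℕ :=
  (Finset.univ.filter fun j => v j ≠ 0).card

lemma wt_eq_sum {n : Type*} [Fintype n] (v : n → ZMod 2) :
    wt v = ∑ x, if v x ≠ 0 then 1 else 0 := by
  rw [wt, Finset.card_filter]

lemma wt_sumElim {m n : Type*} [Fintype m] [Fintype n] (u : m → ZMod 2) (v : n → ZMod 2) :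
    wt (Sum.elim u v) = wt u + wt v := by
  simp [wt_eq_sum, Fintype.sum_sum_type]
  congr

lemma zmod2_add_self (x : ZMod 2) : x + x = 0 := by revert x; decide

lemma zmod2_cases (x : ZMod 2) : x = 0 ∨ x = 1 := by revert x; decide

lemma sum_eq_wt {k : ℕ} (c : Fin k → ZMod 2) : ∑ i, c i = (wt c : ZMod 2) := by
  rw [wt_eq_sum]
  push_cast
  refine Finset.sum_congr rfl fun i _ => ?_
  rcases zmod2_cases (c i) with h | h <;> simp [h]

lemma vecMul_Gmat {k : ℕ} (c : Fin k → ZMod 2) :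
    Matrix.vecMul c (Gmat k) = fun j => (∑ i, c i) + c j := by
  funext j
  have h : ∀ i, c i * Gmat k i j = c i + (if i = j then c i else 0) := by
    intro i
    by_cases h : i = j <;> simp [Gmat, h, zmod2_add_self]
  simp only [Matrix.vecMul, dotProduct, h, Finset.sum_add_distrib,
    Finset.sum_ite_eq' Finset.univ j c, Finset.mem_univ, if_true]

lemma wt_codeword {k : ℕ} (c : Fin k → ZMod 2) :
    wt (Matrix.vecMul c (GLkp k)) =
      wt c + wt (fun j => (wt c : ZMod 2) + c j) + wt c := by
  rw [GLkp, Matrix.vecMul_fromCols, Matrix.vecMul_fromCols, Matrix.vecMul_one,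
    wt_sumElim, wt_sumElim, vecMul_Gmat, sum_eq_wt c]
  ring

/-- For `k ≥ 5`, the minimum distance of `L_k^+` is 6. -/
theorem minDistance_Lkp_eq_six (k : ℕ) (hk : 5 ≤ k) :
    (∀ c : Fin k → ZMod 2, c ≠ 0 → 6 ≤ wt (Matrix.vecMul c (GLkp k))) ∧
    (∃ c : Fin k → ZMod 2, c ≠ 0 ∧ wt (Matrix.vecMul c (GLkp k)) = 6) := by
  constructor
  · intro c hc
    have hw1 : 1 ≤ wt c := by
      rcases Function.ne_iff.mp hc with ⟨i, hi⟩
      simp only [Pi.zero_apply] at hi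
      have : i ∈ Finset.univ.filter fun j => c j ≠ 0 := by
        simp [hi]
      exact Finset.card_pos.mpr ⟨i, this⟩
    rw [wt_codeword]
    rcases Nat.even_or_odd (wt c) with he | ho
    · -- even weight: middle block equals c
      have hs : ((wt c : ZMod 2)) = 0 := by
        rcases he with ⟨m, hm⟩
        rw [hm]; push_cast; rw [← two_mul]
        norm_num [show (2 : ZMod 2) = 0 from by decide]
        left; decide
      have hmid : (fun j => (wt c : ZMod 2) + c j) = c := by
        funext j; rw [hs, zero_add]
      rw [hmid]
      have hw2 : 2 ≤ wt c := by
        rcases he with ⟨m, hm⟩; omega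
      omega
    · -- odd weight: middle block has weight k - wt c
      have hs : ((wt c : ZMod 2)) = 1 := by
        rcases ho with ⟨m, hm⟩
        rw [hm]; push_cast
        norm_num [show (2 : ZMod 2) = 0 from by decide]
        left; decide
      have hmid : wt (fun j => (wt c : ZMod 2) + c j) + wt c = k := by
        rw [wt]
        have : ∀ j, ((wt c : ZMod 2) + c j ≠ 0) ↔ ¬ (c j ≠ 0) := by
          intro j; rw [hs]
          rcases zmod2_cases (c j) with h | h <;> simp [h] <;> decide
        simp only [this]
        rw [wt, Finset.filter_not, Finset.card_sdiff_of_subset (Finset.filter_subset _ _)]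
        have := Finset.card_filter_le Finset.univ (fun j => c j ≠ 0)
        simp only [Finset.card_univ, Fintype.card_fin] at *
        omega
      omega
  · -- a weight-6 codeword
    haveI : NeZero k := ⟨by omega⟩
    have h01 : (0 : Fin k) ≠ 1 := by
      apply Fin.ne_of_val_ne
      simp [Fin.val_one', Nat.mod_eq_of_lt (by omega : 1 < k)]
    set c : Fin k → ZMod 2 := fun j => if j = 0 ∨ j = 1 then 1 else 0 with hcdef
    refine ⟨c, ?_, ?_⟩
    · intro h
      have : c 0 = 0 := congrFun h 0
      simp [hcdef] at this
    · have hfilter : (Finset.univ.filter fun j => c j ≠ 0) = {0, 1} := by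
        ext j
        by_cases h : j = 0 ∨ j = 1
        · simp [hcdef, h]; tauto
        · simp [hcdef, h]; exact not_or.mp h
      have hwc : wt c = 2 := by
        rw [wt, hfilter, Finset.card_insert_of_notMem (by simp [h01]),
          Finset.card_singleton]
      have hs : ((wt c : ZMod 2)) = 0 := by rw [hwc]; decide
      have hmid : (fun j => (wt c : ZMod 2) + c j) = c := by
        funext j; rw [hs, zero_add]
      rw [wt_codeword, hmid, hwc]
end

section
/- Logical dimension of QL_k: for every natural number k ≥ 1, with H_X = H_{L_k} ⊗ I_{3k} and H_Z = G_{L_k} ⊗ H_{L_k^+} over 𝔽₂, the 𝔽₂-span of the rows of H_Z is contained in the null space K = {v ∈ 𝔽₂^{6k²} : H_X · v = 0}, and the dimension of K minus the dimension of the row space of H_Z equals k² (so the CSS code QL_k encodes k² logical qubits in 6k² physical qubits). -/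
open Matrix Kronecker

/-- Generator matrix of the code `L_k`: the block matrix `[I_k | G_k]`. -/
def GLk (k : ℕ) : Matrix (Fin k) (Fin k ⊕ Fin k) (ZMod 2) :=
  Matrix.fromCols 1 (Gmat k)

/-- Parity-check matrix of the code `L_k`: the block matrix `[G_k | I_k]`. -/
def HLk (k : ℕ) : Matrix (Fin k) (Fin k ⊕ Fin k) (ZMod 2) :=
  Matrix.fromCols (Gmat k) 1

/-- Parity-check matrix of the code `L_k^+`:
the block matrix `[[G_k, I_k, 0_k], [I_k, 0_k, I_k]]`. -/
def HLkp (k : ℕ) : Matrix (Fin k ⊕ Fin k) (Fin k ⊕ Fin k ⊕ Fin k) (ZMod 2) :=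
  Matrix.fromRows
    (Matrix.fromCols (Gmat k) (Matrix.fromCols 1 0))
    (Matrix.fromCols 1 (Matrix.fromCols 0 1))

/-- The X-type stabilizer matrix of the quantum code `QL_k`: `H_X = H_{L_k} ⊗ I_{3k}`,
a `3k² × 6k²` matrix over 𝔽₂ (the `3k`-element index set is `Fin k ⊕ Fin k ⊕ Fin k`). -/
def HXq (k : ℕ) :
    Matrix (Fin k × (Fin k ⊕ Fin k ⊕ Fin k))
      ((Fin k ⊕ Fin k) × (Fin k ⊕ Fin k ⊕ Fin k)) (ZMod 2) :=
  HLk k ⊗ₖ (1 : Matrix (Fin k ⊕ Fin k ⊕ Fin k) (Fin k ⊕ Fin k ⊕ Fin k) (ZMod 2))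

/-- The Z-type stabilizer matrix of the quantum code `QL_k`: `H_Z = G_{L_k} ⊗ H_{L_k^+}`,
a `2k² × 6k²` matrix over 𝔽₂. -/
def HZq (k : ℕ) :
    Matrix (Fin k × (Fin k ⊕ Fin k))
      ((Fin k ⊕ Fin k) × (Fin k ⊕ Fin k ⊕ Fin k)) (ZMod 2) :=
  GLk k ⊗ₖ HLkp k

lemma Gmat_transpose (k : ℕ) : (Gmat k)ᵀ = Gmat k := by
  ext i j; simp [Gmat, Matrix.transpose_apply, eq_comm]

lemma HLk_mul_GLk_T (k : ℕ) : HLk k * (GLk k)ᵀ = 0 := by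
  rw [HLk, GLk, Matrix.transpose_fromCols, Matrix.fromCols_mul_fromRows,
    Gmat_transpose, Matrix.transpose_one, Matrix.mul_one, Matrix.one_mul]
  ext i j
  simp [CharTwo.add_self_eq_zero]

lemma HX_mul_HZ_T (k : ℕ) : HXq k * (HZq k)ᵀ = 0 := by
  rw [HXq, HZq, ← Matrix.kroneckerMap_transpose, ← Matrix.mul_kronecker_mul,
    HLk_mul_GLk_T, Matrix.zero_kronecker]

lemma HLk_rightInv (k : ℕ) : HLk k * Matrix.fromRows (0 : Matrix (Fin k) (Fin k) (ZMod 2)) (1 : Matrix (Fin k) (Fin k) (ZMod 2)) = 1 := by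
  rw [HLk, Matrix.fromCols_mul_fromRows, Matrix.mul_zero, Matrix.one_mul, zero_add]

lemma GLk_rightInv (k : ℕ) : GLk k * Matrix.fromRows (1 : Matrix (Fin k) (Fin k) (ZMod 2)) (0 : Matrix (Fin k) (Fin k) (ZMod 2)) = 1 := by
  rw [GLk, Matrix.fromCols_mul_fromRows, Matrix.mul_zero, Matrix.one_mul, add_zero]

lemma HLkp_rightInv (k : ℕ) :
    HLkp k * Matrix.fromRows (0 : Matrix (Fin k) (Fin k ⊕ Fin k) (ZMod 2)) (1 : Matrix (Fin k ⊕ Fin k) (Fin k ⊕ Fin k) (ZMod 2)) = 1 := by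
  rw [HLkp, Matrix.fromRows_mul, Matrix.fromCols_mul_fromRows,
    Matrix.fromCols_mul_fromRows, Matrix.mul_zero, Matrix.mul_zero, Matrix.mul_one,
    Matrix.mul_one, zero_add, zero_add]
  ext (i | i) (j | j) <;>
    simp [Matrix.fromRows_apply_inl, Matrix.fromRows_apply_inr, Matrix.fromCols_apply_inl,
        Matrix.fromCols_apply_inr, Matrix.one_apply, Sum.inl.injEq, Sum.inr.injEq]

lemma rank_HXq (k : ℕ) : (HXq k).rank = 3 * k ^ 2 := by
  have h1 : HXq k * ((Matrix.fromRows (0 : Matrix (Fin k) (Fin k) (ZMod 2)) (1 : Matrix (Fin k) (Fin k) (ZMod 2))) ⊗ₖ (1 : Matrix (Fin k ⊕ Fin k ⊕ Fin k) (Fin k ⊕ Fin k ⊕ Fin k) (ZMod 2))) = 1 := by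
    rw [HXq, ← Matrix.mul_kronecker_mul, HLk_rightInv, Matrix.one_mul, Matrix.one_kronecker_one]
  have h2 := Matrix.rank_mul_le_left (HXq k) ((Matrix.fromRows (0 : Matrix (Fin k) (Fin k) (ZMod 2)) (1 : Matrix (Fin k) (Fin k) (ZMod 2))) ⊗ₖ (1 : Matrix (Fin k ⊕ Fin k ⊕ Fin k) (Fin k ⊕ Fin k ⊕ Fin k) (ZMod 2)))
  rw [h1, Matrix.rank_one] at h2
  have h3 := Matrix.rank_le_card_height (HXq k)
  simp only [Fintype.card_prod, Fintype.card_sum, Fintype.card_fin] at h2 h3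
  nlinarith

lemma rank_HZq (k : ℕ) : (HZq k).rank = 2 * k ^ 2 := by
  have h1 : HZq k * ((Matrix.fromRows (1 : Matrix (Fin k) (Fin k) (ZMod 2)) (0 : Matrix (Fin k) (Fin k) (ZMod 2))) ⊗ₖ (Matrix.fromRows (0 : Matrix (Fin k) (Fin k ⊕ Fin k) (ZMod 2)) (1 : Matrix (Fin k ⊕ Fin k) (Fin k ⊕ Fin k) (ZMod 2)))) = 1 := by
    rw [HZq, ← Matrix.mul_kronecker_mul, GLk_rightInv, HLkp_rightInv, Matrix.one_kronecker_one]
  have h2 := Matrix.rank_mul_le_left (HZq k) ((Matrix.fromRows (1 : Matrix (Fin k) (Fin k) (ZMod 2)) (0 : Matrix (Fin k) (Fin k) (ZMod 2))) ⊗ₖ (Matrix.fromRows (0 : Matrix (Fin k) (Fin k ⊕ Fin k) (ZMod 2)) (1 : Matrix (Fin k ⊕ Fin k) (Fin k ⊕ Fin k) (ZMod 2))))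
  rw [h1, Matrix.rank_one] at h2
  have h3 := Matrix.rank_le_card_height (HZq k)
  simp only [Fintype.card_prod, Fintype.card_sum, Fintype.card_fin] at h2 h3
  nlinarith


/-- Logical dimension of `QL_k`: for `k ≥ 1`, the row space of `H_Z` is contained in the
null space `K` of `H_X`, and `dim K - dim (row space of H_Z) = k²`. -/
theorem logicalDimension_QLk (k : ℕ) (hk : 1 ≤ k) :
    Submodule.span (ZMod 2) (Set.range (HZq k)) ≤
      LinearMap.ker (Matrix.mulVecLin (HXq k)) ∧
    Module.finrank (ZMod 2) ↥(LinearMap.ker (Matrix.mulVecLin (HXq k))) -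
      Module.finrank (ZMod 2) ↥(Submodule.span (ZMod 2) (Set.range (HZq k))) = k ^ 2 := by
  have hspan : Submodule.span (ZMod 2) (Set.range (HZq k)) =
      LinearMap.range (Matrix.mulVecLin (HZq k)ᵀ) := by
    rw [Matrix.range_mulVecLin, Matrix.col_transpose]
    rfl
  constructor
  · rw [hspan]
    rw [LinearMap.range_le_ker_iff, ← Matrix.mulVecLin_mul, HX_mul_HZ_T,
      Matrix.mulVecLin_zero]
  · have hker := LinearMap.finrank_range_add_finrank_ker (Matrix.mulVecLin (HXq k))
    have hrX : Module.finrank (ZMod 2) ↥(LinearMap.range (Matrix.mulVecLin (HXq k))) = 3 * k ^ 2 :=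
      rank_HXq k
    have hdom : Module.finrank (ZMod 2)
        (((Fin k ⊕ Fin k) × (Fin k ⊕ Fin k ⊕ Fin k)) → ZMod 2) = 6 * k ^ 2 := by
      simp [Module.finrank_pi, Fintype.card_prod, Fintype.card_sum]
      ring
    rw [hspan]
    have hrZ : Module.finrank (ZMod 2) ↥(LinearMap.range (Matrix.mulVecLin (HZq k)ᵀ)) = 2 * k ^ 2 := by
      have := Matrix.rank_transpose (HZq k)
      rw [rank_HZq] at this
      exact this
    rw [hrZ]
    rw [hrX, hdom] at hker
    omega
end
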